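/- arXiv:2203.03090 — 3 statements merged into one kernel-verified Lean document; each statement's English description precedes it below -/
import Mathlib

section
/- Let A = O_X[x_1 t^{1/a_1},...,x_k t^{1/a_k}]^{int} be a Rees center on a regular scheme with a_1 ≤ a_2 ≤ ... ≤ a_k, and extend (x_1,...,x_k) to a full regular system of parameters (x_1,...,x_n). If f t^a ∈ A_a t^a is a homogeneous element of A and |α|/a_1 < a, then the graded differential operator D^α_{x t^{1/a_1}} = t^{-|α|/a_1} D_{x^α} sends f t^a into A_{a - |α|/a_1} t^{a - |α|/a_1}; i.e., the graded derivations t^{-1/a_1} ∂/∂x_i for i = 1,...,k preserve the center A. -/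
open MvPolynomial

/-- The normalized (divided-power) partial derivative `D_{x^α} = (1/α!) ∂^{|α|}/∂x^α`,
characterized on monomials by `D_{x^α}(x^s) = (∏ᵢ C(sᵢ,αᵢ)) x^{s-α}`. -/
noncomputable def Dnorm {σ : Type*} {K : Type*} [CommSemiring K] (α : σ →₀ ℕ)
    (f : MvPolynomial σ K) : MvPolynomial σ K :=
  Finsupp.sum (AddMonoidAlgebra.coeff f) fun s c =>
    (∏ i ∈ α.support, (s i).choose (α i)) • (monomial (s - α) c : MvPolynomial σ K)

/-- The degree-`b` graded piece of the integrally closed Rees center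
`O_X[x₁ t^{1/a₁},…,x_k t^{1/a_k}]^{int}` on `X = 𝔸ⁿ`, where `x_i = X i` for `i < k`:
the ideal generated by the monomials `x^c` with `∑ cᵢ/aᵢ ≥ b`. -/
noncomputable def centerPiece (K : Type*) [CommSemiring K] (n k : ℕ) (hkn : k ≤ n)
    (a : Fin k → ℚ) (b : ℚ) : Ideal (MvPolynomial (Fin n) K) :=
  Ideal.span {y | ∃ c : Fin k → ℕ, b ≤ ∑ i, (c i : ℚ) / a i ∧
    y = ∏ i, (X (Fin.castLE hkn i) : MvPolynomial (Fin n) K) ^ c i}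

section Aux

variable {K : Type*} [CommSemiring K] {n k : ℕ} (hkn : k ≤ n)

/-- The weight of an exponent vector. -/
noncomputable def wgt (a : Fin k → ℚ) (s : Fin n →₀ ℕ) : ℚ :=
  ∑ i, (s (Fin.castLE hkn i) : ℚ) / a i

lemma gen_eq (c : Fin k → ℕ) :
    (∏ i, (X (Fin.castLE hkn i) : MvPolynomial (Fin n) K) ^ c i) =
      monomial (∑ i, Finsupp.single (Fin.castLE hkn i) (c i)) (1 : K) := by
  rw [monomial_sum_one]
  simp [X_pow_eq_monomial]

lemma d_apply (c : Fin k → ℕ) (j : Fin k) :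
    (∑ i, Finsupp.single (Fin.castLE hkn i) (c i)) (Fin.castLE hkn j) = c j := by
  rw [Finsupp.finset_sum_apply]
  simp only [Finsupp.single_apply, Fin.castLE_inj]
  rw [Finset.sum_ite_eq']
  simp

lemma d_le (s : Fin n →₀ ℕ) :
    (∑ i, Finsupp.single (Fin.castLE hkn i) (s (Fin.castLE hkn i))) ≤ s := by
  intro j
  rw [Finsupp.finset_sum_apply]
  simp only [Finsupp.single_apply]
  by_cases hj : ∃ i : Fin k, Fin.castLE hkn i = j
  · obtain ⟨i₀, rfl⟩ := hj
    simp only [Fin.castLE_inj]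
    rw [Finset.sum_ite_eq']
    simp
  · rw [Finset.sum_eq_zero]
    · exact Nat.zero_le _
    intro i _
    rw [if_neg fun h => hj ⟨i, h⟩]

lemma mem_centerPiece_of_forall (a : Fin k → ℚ) (b : ℚ) (f : MvPolynomial (Fin n) K)
    (h : ∀ s ∈ f.support, b ≤ wgt hkn a s) :
    f ∈ centerPiece K n k hkn a b := by
  rw [f.as_sum]
  refine Ideal.sum_mem _ fun s hs => ?_
  set d : Fin n →₀ ℕ := ∑ i, Finsupp.single (Fin.castLE hkn i) (s (Fin.castLE hkn i)) with hd
  have hds : d ≤ s := d_le hkn s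
  have key : (monomial s (coeff s f) : MvPolynomial (Fin n) K) =
      monomial (s - d) (coeff s f) * monomial d 1 := by
    rw [monomial_mul, mul_one, tsub_add_cancel_of_le hds]
  rw [key]
  refine Ideal.mul_mem_left _ _ (Ideal.subset_span ?_)
  refine ⟨fun i => s (Fin.castLE hkn i), h s hs, ?_⟩
  rw [gen_eq]

lemma forall_of_mem_centerPiece (a : Fin k → ℚ) (ha : ∀ i, 0 < a i) (b : ℚ)
    (f : MvPolynomial (Fin n) K) (hf : f ∈ centerPiece K n k hkn a b) :
    ∀ s ∈ f.support, b ≤ wgt hkn a s := by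
  classical
  have hw0 : ∀ s : Fin n →₀ ℕ, 0 ≤ wgt hkn a s := fun s =>
    Finset.sum_nonneg fun i _ => div_nonneg (Nat.cast_nonneg _) (ha i).le
  refine Submodule.span_induction ?_ ?_ ?_ ?_ hf
  · rintro y ⟨c, hc, rfl⟩ s hs
    rw [gen_eq] at hs
    by_cases h10 : (1 : K) = 0
    · rw [support_monomial, if_pos h10] at hs
      simp at hs
    rw [support_monomial, if_neg h10, Finset.mem_singleton] at hs
    subst hs
    refine hc.trans (le_of_eq ?_)
    unfold wgt
    refine Finset.sum_congr rfl fun j _ => ?_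
    rw [d_apply]
  · simp
  · intro x y _ _ hx hy s hs
    rcases Finset.mem_union.1 (support_add hs) with h | h
    exacts [hx s h, hy s h]
  · intro r x _ hx s hs
    rw [smul_eq_mul] at hs
    obtain ⟨u, hu, v, hv, rfl⟩ := Finset.mem_add.1 (support_mul r x hs)
    have : wgt hkn a (u + v) = wgt hkn a u + wgt hkn a v := by
      unfold wgt
      rw [← Finset.sum_add_distrib]
      refine Finset.sum_congr rfl fun j _ => ?_
      rw [Finsupp.add_apply]
      push_cast
      ring
    rw [this]
    have := hx v hv
    have := hw0 u
    linarith

end Aux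

/-- Let `A = O_X[x₁ t^{1/a₁},…,x_k t^{1/a_k}]^{int}` be a Rees center on a
smooth variety (model: `X = 𝔸ⁿ` over a field of characteristic zero) with
`a₁ ≤ a₂ ≤ … ≤ a_k`, the coordinates `x₁,…,x_k` being part of the full coordinate system
`x₁,…,x_n`.  If `f t^b ∈ A_b t^b` is homogeneous of degree `b` and `|α|/a₁ < b`, then the
graded differential operator `D^α_{x t^{1/a₁}} = t^{-|α|/a₁} D_{x^α}` maps `f t^b` into
`A_{b-|α|/a₁} t^{b-|α|/a₁}`: the graded derivations `t^{-1/a₁} ∂/∂xᵢ` preserve the center. -/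
theorem graded_derivations_preserve_center
    {K : Type*} [Field K] [CharZero K] (n k : ℕ) (hk : 0 < k) (hkn : k ≤ n)
    (a : Fin k → ℚ) (ha : ∀ i, 0 < a i)
    (hmono : ∀ i j : Fin k, i ≤ j → a i ≤ a j)
    (b : ℚ) (f : MvPolynomial (Fin n) K) (hf : f ∈ centerPiece K n k hkn a b)
    (α : Fin n →₀ ℕ)
    (hα : ((α.sum fun _ m => m : ℕ) : ℚ) / a ⟨0, hk⟩ < b) :
    Dnorm α f ∈
      centerPiece K n k hkn a (b - ((α.sum fun _ m => m : ℕ) : ℚ) / a ⟨0, hk⟩) := by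
  classical
  set a₀ : Fin k := ⟨0, hk⟩
  have ha₀ : (0 : ℚ) < a a₀ := ha a₀
  have hfw := forall_of_mem_centerPiece hkn a ha b f hf
  -- |α| as a sum over Fin n
  have hsum : ((α.sum fun _ m => m : ℕ) : ℚ) = ∑ j : Fin n, (α j : ℚ) := by
    have h := Finsupp.sum_fintype α (fun _ m => m) (fun _ => rfl)
    rw [h]
    push_cast
    rfl
  apply mem_centerPiece_of_forall
  intro t ht
  -- t comes from some s ∈ f.support with t = s - α
  have : ∃ s ∈ f.support, t = s - α := by
    unfold Dnorm at ht
    rw [Finsupp.sum] at ht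
    have := support_sum ht
    obtain ⟨s, hs, hts⟩ := Finset.mem_biUnion.1 this
    refine ⟨s, hs, ?_⟩
    replace hts := Finsupp.support_smul hts
    exact Finset.mem_singleton.1 (support_monomial_subset hts)
  obtain ⟨s, hs, rfl⟩ := this
  have hws := hfw s hs
  -- the weight drop bound
  have h1 : ∀ j : Fin k, (s (Fin.castLE hkn j) : ℚ) / a j - (α (Fin.castLE hkn j) : ℚ) / a j
      ≤ ((s - α) (Fin.castLE hkn j) : ℚ) / a j := by
    intro j
    rw [div_sub_div_same]
    have hnat : (s (Fin.castLE hkn j) : ℚ) - α (Fin.castLE hkn j)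
        ≤ ((s - α) (Fin.castLE hkn j) : ℚ) := by
      rw [Finsupp.tsub_apply]
      have h2 : s (Fin.castLE hkn j) ≤
          s (Fin.castLE hkn j) - α (Fin.castLE hkn j) + α (Fin.castLE hkn j) := by omega
      have h3 := (Nat.cast_le (α := ℚ)).2 h2
      push_cast at h3
      linarith
    gcongr
    exact (ha j).le
  have h2 : ∀ j : Fin k, (α (Fin.castLE hkn j) : ℚ) / a j ≤ (α (Fin.castLE hkn j) : ℚ) / a a₀ := by
    intro j
    exact div_le_div_of_nonneg_left (Nat.cast_nonneg _) ha₀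
      (hmono a₀ j (Fin.le_def.mpr (Nat.zero_le _)))
  have h3 : ∑ j : Fin k, (α (Fin.castLE hkn j) : ℚ) ≤ ∑ j : Fin n, (α j : ℚ) := by
    have him := Finset.sum_image (s := (Finset.univ : Finset (Fin k)))
      (f := fun j : Fin n => (α j : ℚ)) (g := Fin.castLE hkn)
      (fun x _ y _ h => Fin.castLE_injective hkn h)
    rw [← him]
    exact Finset.sum_le_sum_of_subset_of_nonneg (Finset.subset_univ _)
      fun j _ _ => Nat.cast_nonneg _
  calc b - ((α.sum fun _ m => m : ℕ) : ℚ) / a a₀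
      ≤ wgt hkn a s - (∑ j : Fin k, (α (Fin.castLE hkn j) : ℚ)) / a a₀ := by
        rw [hsum]
        have : (∑ j : Fin k, (α (Fin.castLE hkn j) : ℚ)) / a a₀
            ≤ (∑ j : Fin n, (α j : ℚ)) / a a₀ := by gcongr
        linarith
    _ = wgt hkn a s - ∑ j : Fin k, (α (Fin.castLE hkn j) : ℚ) / a a₀ := by
        rw [Finset.sum_div]
    _ ≤ wgt hkn a s - ∑ j : Fin k, (α (Fin.castLE hkn j) : ℚ) / a j := by
        have := Finset.sum_le_sum fun j (_ : j ∈ Finset.univ) => h2 j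
        linarith
    _ = ∑ j : Fin k, ((s (Fin.castLE hkn j) : ℚ) / a j - (α (Fin.castLE hkn j) : ℚ) / a j) := by
        unfold wgt
        rw [Finset.sum_sub_distrib]
    _ ≤ wgt hkn a (s - α) := Finset.sum_le_sum fun j _ => h1 j
end

section
/- Let σ: B → X be the full cobordant blow-up of an R-admissible center A^{ext} = O_X[t^{1/w}, x̄_1 t^{1/a_1},...,x̄_k t^{1/a_k}], where R is a rational Rees algebra on a smooth variety X with ord_p(R) ≤ a_1 for all p ∈ X. Then ord_{p'}(σ^c(R)) ≤ a_1 for all p' ∈ B, where σ^c(R) = ⊕ (O_B · R_a · t_B^{aw}) t^a is the controlled transform. -/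
open MvPolynomial

/-- The structural morphism `O_X → O_B` of the full cobordant blow-up
`B = Spec O_X[t_B⁻¹, x₁ t_B^{w₁},…,x_k t_B^{w_k}]`, in the coordinates
`(s, x'₁,…,x'ₙ)` on `B` (with `s = t_B⁻¹ = X 0` and `x'ᵢ = X (i+1)`):
it sends `xᵢ ↦ x'ᵢ · s^{wᵢ}`. -/
noncomputable def cobordantPullback (K : Type*) [CommSemiring K] (n k : ℕ)
    (wnat : Fin k → ℕ) :
    MvPolynomial (Fin n) K →ₐ[K] MvPolynomial (Fin (n + 1)) K :=
  aeval fun i : Fin n =>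
    if h : (i : ℕ) < k then X i.succ * X 0 ^ wnat ⟨i, h⟩ else X i.succ

section Aux

open Finsupp

/-- The successor embedding `Fin n ↪ Fin (n+1)`. -/
def embS (n : ℕ) : Fin n ↪ Fin (n + 1) := ⟨Fin.succ, Fin.succ_injective n⟩

@[simp] lemma embS_apply {n : ℕ} (i : Fin n) : embS n i = i.succ := rfl

/-- The weight of the `i`-th variable (0 for `i ≥ k`). -/
def wt (k : ℕ) (wnat : Fin k → ℕ) {n : ℕ} (i : Fin n) : ℕ :=
  if h : (i : ℕ) < k then wnat ⟨i, h⟩ else 0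

/-- Total weight of a multi-exponent. -/
def Wsum (n k : ℕ) (wnat : Fin k → ℕ) (u : Fin n →₀ ℕ) : ℕ :=
  u.sum fun i m => wt k wnat i * m

lemma Wsum_add (n k : ℕ) (wnat : Fin k → ℕ) (u v : Fin n →₀ ℕ) :
    Wsum n k wnat (u + v) = Wsum n k wnat u + Wsum n k wnat v :=
  Finsupp.sum_add_index' (fun _ => mul_zero _) (fun a b₁ b₂ => mul_add _ _ _)

lemma emb_apply_zero {n : ℕ} (u : Fin n →₀ ℕ) :
    Finsupp.embDomain (embS n) u 0 = 0 := by
  apply Finsupp.embDomain_notin_range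
  rintro ⟨j, hj⟩
  exact Fin.succ_ne_zero j hj

@[simp] lemma emb_apply_succ {n : ℕ} (u : Fin n →₀ ℕ) (j : Fin n) :
    Finsupp.embDomain (embS n) u j.succ = u j :=
  Finsupp.embDomain_apply_self (embS n) u j

lemma Dnorm_monomial {σ K : Type*} [CommSemiring K] (α u : σ →₀ ℕ) (c : K) :
    Dnorm α (monomial u c) =
      (∏ i ∈ α.support, (u i).choose (α i)) • monomial (u - α) c := by
  unfold Dnorm
  refine MvPolynomial.sum_monomial_eq ?_
  simp

lemma Dnorm_add {σ K : Type*} [CommSemiring K] (α : σ →₀ ℕ)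
    (f g : MvPolynomial σ K) :
    Dnorm α (f + g) = Dnorm α f + Dnorm α g := by
  unfold Dnorm
  refine Finsupp.sum_add_index' (fun _ => ?_) (fun s c₁ c₂ => ?_)
  · simp
  · rw [map_add, smul_add]

lemma cp_X (K : Type*) [CommSemiring K] (n k : ℕ) (wnat : Fin k → ℕ) (i : Fin n) :
    cobordantPullback K n k wnat (X i) = X i.succ * X 0 ^ wt k wnat i := by
  rw [cobordantPullback, aeval_X, wt]
  split_ifs with h
  · rfl
  · simp

lemma cp_monomial (K : Type*) [CommSemiring K] (n k : ℕ) (wnat : Fin k → ℕ)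
    (u : Fin n →₀ ℕ) (c : K) :
    cobordantPullback K n k wnat (monomial u c)
      = X 0 ^ Wsum n k wnat u * monomial (Finsupp.embDomain (embS n) u) c := by
  rw [cobordantPullback, aeval_monomial]
  have h1 : (u.prod fun i m =>
      (if h : (i : ℕ) < k then X i.succ * X 0 ^ wnat ⟨i, h⟩ else X i.succ :
        MvPolynomial (Fin (n + 1)) K) ^ m)
      = (∏ i ∈ u.support, (X i.succ : MvPolynomial (Fin (n + 1)) K) ^ u i)
        * X 0 ^ Wsum n k wnat u := by
    rw [Finsupp.prod]
    calc ∏ i ∈ u.support,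
          (if h : (i : ℕ) < k then X i.succ * X 0 ^ wnat ⟨i, h⟩ else X i.succ :
            MvPolynomial (Fin (n + 1)) K) ^ u i
        = ∏ i ∈ u.support,
            ((X i.succ : MvPolynomial (Fin (n + 1)) K) ^ u i
              * X 0 ^ (wt k wnat i * u i)) := by
          refine Finset.prod_congr rfl fun i _ => ?_
          rw [wt]
          split_ifs with h
          · rw [mul_pow, pow_mul]
          · simp
      _ = (∏ i ∈ u.support, (X i.succ : MvPolynomial (Fin (n + 1)) K) ^ u i)
            * ∏ i ∈ u.support, (X 0 : MvPolynomial (Fin (n + 1)) K) ^ (wt k wnat i * u i) :=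
          Finset.prod_mul_distrib
      _ = _ := by rw [Finset.prod_pow_eq_pow_sum]; rfl
  rw [h1]
  have h2 : (∏ i ∈ u.support, (X i.succ : MvPolynomial (Fin (n + 1)) K) ^ u i)
      = monomial (Finsupp.embDomain (embS n) u) (1 : K) := by
    rw [monomial_eq, Finsupp.prod_embDomain, C_1, one_mul, Finsupp.prod]
    simp
  rw [h2, show (monomial (Finsupp.embDomain (embS n) u)) c
      = C c * monomial (Finsupp.embDomain (embS n) u) (1 : K) from by
        rw [C_mul_monomial, mul_one],
    algebraMap_eq]
  ring

lemma key_comm (K : Type*) [CommSemiring K] (n k : ℕ) (wnat : Fin k → ℕ)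
    (α : Fin n →₀ ℕ) (f : MvPolynomial (Fin n) K) :
    Dnorm (Finsupp.embDomain (embS n) α) (cobordantPullback K n k wnat f)
      = X 0 ^ Wsum n k wnat α * cobordantPullback K n k wnat (Dnorm α f) := by
  induction f using MvPolynomial.induction_on' with
  | add p q hp hq =>
    rw [map_add, Dnorm_add, Dnorm_add, map_add, hp, hq, mul_add]
  | monomial u c =>
    rw [cp_monomial, X_pow_eq_monomial, monomial_mul, one_mul, Dnorm_monomial,
      Dnorm_monomial, map_nsmul, cp_monomial, mul_smul_comm, ← mul_assoc,
      ← pow_add, X_pow_eq_monomial, monomial_mul, one_mul]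
    have hQ : (∏ i ∈ (Finsupp.embDomain (embS n) α).support,
        ((Finsupp.single (0 : Fin (n + 1)) (Wsum n k wnat u)
          + Finsupp.embDomain (embS n) u) i).choose
          ((Finsupp.embDomain (embS n) α) i))
        = ∏ j ∈ α.support, (u j).choose (α j) := by
      rw [Finsupp.support_embDomain, Finset.prod_map]
      refine Finset.prod_congr rfl fun j _ => ?_
      simp [Finsupp.single_apply, (Fin.succ_ne_zero j).symm, Fin.succ_ne_zero j]
    rw [hQ]
    by_cases hle : α ≤ u
    · have hWu : Wsum n k wnat u = Wsum n k wnat α + Wsum n k wnat (u - α) := by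
        conv_lhs => rw [← add_tsub_cancel_of_le hle]
        rw [Wsum_add]
      have hE : Finsupp.single (0 : Fin (n + 1)) (Wsum n k wnat u)
            + Finsupp.embDomain (embS n) u - Finsupp.embDomain (embS n) α
          = Finsupp.single (0 : Fin (n + 1))
              (Wsum n k wnat α + Wsum n k wnat (u - α))
            + Finsupp.embDomain (embS n) (u - α) := by
        ext x
        refine Fin.cases ?_ (fun j => ?_) x
        · simp [Finsupp.tsub_apply, emb_apply_zero, hWu]
        · simp [Finsupp.tsub_apply, Finsupp.single_apply, Fin.succ_ne_zero j,
            (Fin.succ_ne_zero j).symm]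
      rw [hE]
    · obtain ⟨j, hj⟩ : ∃ j, u j < α j := by
        by_contra hcon
        push_neg at hcon
        exact hle fun i => hcon i
      have hj0 : j ∈ α.support := Finsupp.mem_support_iff.mpr (by omega)
      rw [Finset.prod_eq_zero hj0 (Nat.choose_eq_zero_of_lt hj), zero_smul, zero_smul]

lemma Dnorm_X0_pow_mul (K : Type*) [CommSemiring K] (n : ℕ) (α : Fin n →₀ ℕ)
    (m : ℕ) (h : MvPolynomial (Fin (n + 1)) K) :
    Dnorm (Finsupp.embDomain (embS n) α) (X 0 ^ m * h)
      = X 0 ^ m * Dnorm (Finsupp.embDomain (embS n) α) h := by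
  induction h using MvPolynomial.induction_on' with
  | add p q hp hq => rw [mul_add, Dnorm_add, Dnorm_add, mul_add, hp, hq]
  | monomial u c =>
    rw [X_pow_eq_monomial, monomial_mul, one_mul, Dnorm_monomial, Dnorm_monomial,
      mul_smul_comm, monomial_mul, one_mul]
    have hc : (∏ i ∈ (Finsupp.embDomain (embS n) α).support,
        ((Finsupp.single (0 : Fin (n + 1)) m + u) i).choose
          ((Finsupp.embDomain (embS n) α) i))
        = ∏ i ∈ (Finsupp.embDomain (embS n) α).support,
            (u i).choose ((Finsupp.embDomain (embS n) α) i) := by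
      refine Finset.prod_congr rfl fun i hi => ?_
      rw [Finsupp.support_embDomain, Finset.mem_map] at hi
      obtain ⟨j, _, rfl⟩ := hi
      simp [Finsupp.single_apply, (Fin.succ_ne_zero j).symm]
    rw [hc]
    have hE : Finsupp.single (0 : Fin (n + 1)) m + u - Finsupp.embDomain (embS n) α
        = Finsupp.single (0 : Fin (n + 1)) m + (u - Finsupp.embDomain (embS n) α) := by
      ext x
      refine Fin.cases ?_ (fun j => ?_) x
      · simp [Finsupp.tsub_apply, emb_apply_zero]
      · simp [Finsupp.tsub_apply, Finsupp.single_apply, Fin.succ_ne_zero j,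
          (Fin.succ_ne_zero j).symm]
    rw [hE]

end Aux

/-- Let `σ : B → X` be the full cobordant blow-up of an `R`-admissible
center `A^{ext} = O_X[t^{1/w}, x̄₁ t^{1/a₁},…,x̄_k t^{1/a_k}]` on a smooth variety (model:
`X = 𝔸ⁿ` in characteristic zero), where the rational Rees algebra `R = O_X[f_j t^{b_j}]`
satisfies `ord_p R ≤ a₁` for all `p ∈ X` — expressed, via the derivative criterion, by the
condition that the derivatives `D_{x^α} f_j` with `|α| ≤ b_j a₁` generate the unit ideal.
Then `ord_{p'} (σ^c R) ≤ a₁` for all `p' ∈ B`, where `σ^c R` is the controlled transform,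
with generators `g_j = σ^c(f_j t^{b_j})` determined by `φ(f_j) = s^{b_j w} g_j`: the
derivatives `D^α g_j` with `|α| ≤ b_j a₁` generate the unit ideal of `O_B`. -/
theorem order_of_controlled_transform_le
    {K : Type*} [Field K] [CharZero K] (n k s : ℕ) (hk : 0 < k) (hkn : k ≤ n)
    (a : Fin k → ℚ) (ha : ∀ i, 0 < a i)
    (hmono : ∀ i j : Fin k, i ≤ j → a i ≤ a j)
    (wq : ℚ) (hwq : 0 < wq)
    (wnat : Fin k → ℕ) (hwnat : ∀ i, (wnat i : ℚ) = wq / a i)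
    (f : Fin s → MvPolynomial (Fin n) K)
    (b : Fin s → ℚ) (hb : ∀ j, 0 < b j)
    (hadm : ∀ j, f j ∈ centerPiece K n k hkn a (b j))
    (M : Fin s → ℕ) (hM : ∀ j, (M j : ℚ) = b j * wq)
    (g : Fin s → MvPolynomial (Fin (n + 1)) K)
    (hg : ∀ j, cobordantPullback K n k wnat (f j) =
      (X 0 : MvPolynomial (Fin (n + 1)) K) ^ M j * g j)
    (hord : (⨆ j, Ideal.span {y | ∃ α : Fin n →₀ ℕ,
        ((α.sum fun _ m => m : ℕ) : ℚ) ≤ b j * a ⟨0, hk⟩ ∧ y = Dnorm α (f j)}) = ⊤) :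
    (⨆ j, Ideal.span {y | ∃ α : Fin (n + 1) →₀ ℕ,
        ((α.sum fun _ m => m : ℕ) : ℚ) ≤ b j * a ⟨0, hk⟩ ∧ y = Dnorm α (g j)}) = ⊤ := by
  
  classical
  set φ := cobordantPullback K n k wnat with hφ
  have ha0 : (0 : ℚ) < a ⟨0, hk⟩ := ha _
  have hwt_le : ∀ i : Fin n, wt k wnat i ≤ wnat ⟨0, hk⟩ := by
    intro i
    rw [wt]
    split_ifs with h
    · rw [← Nat.cast_le (α := ℚ), hwnat, hwnat]
      have hle : a ⟨0, hk⟩ ≤ a ⟨i, h⟩ := hmono _ _ (Fin.mk_le_mk.mpr (Nat.zero_le _))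
      exact div_le_div_of_nonneg_left (le_of_lt hwq) ha0 hle
    · exact Nat.zero_le _
  have hW_le : ∀ (j : Fin s) (α : Fin n →₀ ℕ),
      ((α.sum fun _ m => m : ℕ) : ℚ) ≤ b j * a ⟨0, hk⟩ → Wsum n k wnat α ≤ M j := by
    intro j α hα
    have h1 : Wsum n k wnat α ≤ (α.sum fun _ m => m) * wnat ⟨0, hk⟩ := by
      rw [Wsum, Finsupp.sum, Finsupp.sum, Finset.sum_mul]
      refine Finset.sum_le_sum fun i _ => ?_
      rw [mul_comm]
      exact Nat.mul_le_mul_left _ (hwt_le i)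
    have h2 : (((α.sum fun _ m => m) * wnat ⟨0, hk⟩ : ℕ) : ℚ) ≤ (M j : ℚ) := by
      rw [hM j, Nat.cast_mul, hwnat]
      calc ((α.sum fun _ m => m : ℕ) : ℚ) * (wq / a ⟨0, hk⟩)
          ≤ (b j * a ⟨0, hk⟩) * (wq / a ⟨0, hk⟩) :=
            mul_le_mul_of_nonneg_right hα (by positivity)
        _ = b j * wq := by field_simp
    have h3 : ((Wsum n k wnat α : ℕ) : ℚ) ≤ (M j : ℚ) :=
      le_trans (by exact_mod_cast h1) h2
    exact_mod_cast h3
  have hkey : ∀ (j : Fin s) (α : Fin n →₀ ℕ),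
      ((α.sum fun _ m => m : ℕ) : ℚ) ≤ b j * a ⟨0, hk⟩ →
      φ (Dnorm α (f j)) = X 0 ^ (M j - Wsum n k wnat α)
        * Dnorm (Finsupp.embDomain (embS n) α) (g j) := by
    intro j α hα
    have h1 := key_comm K n k wnat α (f j)
    rw [hg j, Dnorm_X0_pow_mul] at h1
    have hle := hW_le j α hα
    have h2 : X 0 ^ Wsum n k wnat α * (X 0 ^ (M j - Wsum n k wnat α)
          * Dnorm (Finsupp.embDomain (embS n) α) (g j))
        = X 0 ^ Wsum n k wnat α * φ (Dnorm α (f j)) := by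
      rw [← mul_assoc, ← pow_add, Nat.add_sub_cancel' hle, h1, hφ]
    exact (mul_left_cancel₀ (pow_ne_zero _ (X_ne_zero _)) h2).symm
  rw [eq_top_iff]
  calc (⊤ : Ideal (MvPolynomial (Fin (n + 1)) K))
      = Ideal.map φ (⨆ j, Ideal.span {y | ∃ α : Fin n →₀ ℕ,
          ((α.sum fun _ m => m : ℕ) : ℚ) ≤ b j * a ⟨0, hk⟩ ∧ y = Dnorm α (f j)}) := by
        rw [hord, Ideal.map_top]
    _ = ⨆ j, Ideal.map φ (Ideal.span {y | ∃ α : Fin n →₀ ℕ,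
          ((α.sum fun _ m => m : ℕ) : ℚ) ≤ b j * a ⟨0, hk⟩ ∧ y = Dnorm α (f j)}) :=
        (Ideal.gc_map_comap φ).l_iSup
    _ ≤ ⨆ j, Ideal.span {y | ∃ α : Fin (n + 1) →₀ ℕ,
          ((α.sum fun _ m => m : ℕ) : ℚ) ≤ b j * a ⟨0, hk⟩ ∧ y = Dnorm α (g j)} := by
        refine iSup_mono fun j => ?_
        rw [Ideal.map_span]
        refine Ideal.span_le.mpr ?_
        rintro y ⟨x, ⟨α, hα, rfl⟩, rfl⟩
        rw [hkey j α hα]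
        exact Ideal.mul_mem_left _ _ (Ideal.subset_span
          ⟨Finsupp.embDomain (embS n) α, by rwa [Finsupp.sum_embDomain], rfl⟩)
end

section
/- Let X be a regular scheme, J = (u_1^{1/w_1},...,u_k^{1/w_k}) a regular weighted center, and B = Spec_X(O_X[t^{-1}, u_1 t^{w_1},...,u_k t^{w_k}]) the full cobordant blow-up. Then the exceptional divisor V_B(t^{-1}) is isomorphic to the weighted normal bundle N_J(X) = Spec_X(gr_J(O_X)), where gr_J(O_X) = ⊕_{a≥0} (J^a)_X/(J^{a+1})_X. -/
open LaurentPolynomial DirectSum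

/-- `u` is part of a regular system of parameters of the (regular) local ring `R`. -/
def IsPartialRegSystemOfParams {R : Type*} [CommRing R] [IsLocalRing R] {k : ℕ}
    (u : Fin k → R) : Prop :=
  ∃ (n : ℕ) (v : Fin n → R) (e : Fin k ↪ Fin n),
    (∀ i, v (e i) = u i) ∧
    Ideal.span (Set.range v) = IsLocalRing.maximalIdeal R ∧
    ringKrullDim R = n

/-- The ideal of sections `(J^a)_X` of the `a`-th power of the weighted center
`J = (u₁^{1/w₁},…,u_k^{1/w_k})`: the ideal generated by the monomials `u^c` with
`∑ cᵢ wᵢ ≥ a`. -/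
def sectionsPow {R : Type*} [CommRing R] {k : ℕ} (u : Fin k → R) (w : Fin k → ℕ)
    (a : ℕ) : Ideal R :=
  Ideal.span {y | ∃ c : Fin k → ℕ, a ≤ ∑ i, c i * w i ∧ y = ∏ i, u i ^ c i}

/-- The coordinate ring `O_B = O_X[t⁻¹, u₁ t^{w₁},…,u_k t^{w_k}]` of the full cobordant
blow-up of the weighted center `(u₁^{1/w₁},…,u_k^{1/w_k})`. -/
noncomputable def cobordantAlgebra {R : Type*} [CommRing R] {k : ℕ}
    (u : Fin k → R) (w : Fin k → ℕ) : Subalgebra R (LaurentPolynomial R) :=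
  Algebra.adjoin R (insert (T (-1)) (Set.range fun i => C (u i) * T (w i)))

section Aux
set_option maxHeartbeats 1000000
set_option synthInstance.maxHeartbeats 1000000
variable {R : Type*} [CommRing R] {k : ℕ} (u : Fin k → R) (w : Fin k → ℕ)

lemma sectionsPow_antitone {a b : ℕ} (hab : a ≤ b) :
    sectionsPow u w b ≤ sectionsPow u w a := by
  apply Ideal.span_mono
  rintro y ⟨c, hc, rfl⟩
  exact ⟨c, hab.trans hc, rfl⟩

lemma sectionsPow_zero : sectionsPow u w 0 = ⊤ := by
  rw [Ideal.eq_top_iff_one]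
  exact Ideal.subset_span ⟨0, by simp, by simp⟩

lemma mem_sectionsPow_monomial (c : Fin k → ℕ) :
    (∏ i, u i ^ c i) ∈ sectionsPow u w (∑ i, c i * w i) :=
  Ideal.subset_span ⟨c, le_refl _, rfl⟩

lemma u_mem_sectionsPow (i : Fin k) : u i ∈ sectionsPow u w (w i) := by
  have h := mem_sectionsPow_monomial u w (Pi.single i 1)
  have h1 : (∑ j, (Pi.single i 1 : Fin k → ℕ) j * w j) = w i := by simp [Pi.single_apply]
  have h2 : (∏ j, u j ^ (Pi.single i 1 : Fin k → ℕ) j) = u i := by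
    simp [Pi.single_apply, pow_ite]
  rwa [h1, h2] at h

lemma sectionsPow_mul_mem {a b : ℕ} {x y : R} (hx : x ∈ sectionsPow u w a)
    (hy : y ∈ sectionsPow u w b) : x * y ∈ sectionsPow u w (a + b) := by
  have h : sectionsPow u w a * sectionsPow u w b ≤ sectionsPow u w (a + b) := by
    rw [sectionsPow, sectionsPow, Ideal.span_mul_span, Ideal.span_le]
    rintro z hz
    simp only [Set.mem_mul] at hz
    obtain ⟨s, ⟨c, hc, rfl⟩, t, ⟨c', hc', rfl⟩, hz⟩ := hz
    subst hz
    refine Ideal.subset_span ⟨c + c', ?_, ?_⟩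
    · calc a + b ≤ (∑ i, c i * w i) + ∑ i, c' i * w i := add_le_add hc hc'
        _ = ∑ i, (c + c') i * w i := by
            rw [← Finset.sum_add_distrib]; simp [add_mul]
    · rw [← Finset.prod_mul_distrib]; simp [pow_add]
  exact h (Ideal.mul_mem_mul hx hy)

lemma T_finprod (s : Finset (Fin k)) (e : Fin k → ℤ) :
    ∏ j ∈ s, (T (e j) : LaurentPolynomial R) = T (∑ j ∈ s, e j) := by
  classical
  induction s using Finset.induction with
  | empty => simp
  | insert a s h ih => rw [Finset.prod_insert h, Finset.sum_insert h, ih, T_add]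

lemma prod_CT (c : Fin k → ℕ) :
    ∏ i, (C (u i) * T (w i)) ^ (c i)
      = C (∏ i, u i ^ c i) * T (∑ i, c i * w i : ℕ) := by
  calc ∏ i, (C (u i) * T (w i)) ^ (c i)
      = ∏ i, (C (u i ^ c i) * T ((c i * w i : ℕ))) := by
        refine Finset.prod_congr rfl fun i _ => ?_
        rw [mul_pow, ← map_pow, T_pow]
        push_cast
        ring_nf
    _ = C (∏ i, u i ^ c i) * T (∑ i, c i * w i : ℕ) := by
        rw [Finset.prod_mul_distrib, map_prod, T_finprod]
        push_cast
        ring_nf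

lemma coeff_mem {p : LaurentPolynomial R} (hp : p ∈ cobordantAlgebra u w) (n : ℤ) :
    p.coeff n ∈ sectionsPow u w n.toNat := by
  induction hp using Algebra.adjoin_induction generalizing n with
  | mem x hx =>
    rcases hx with rfl | ⟨i, rfl⟩
    · rw [show (T (-1) : LaurentPolynomial R) = AddMonoidAlgebra.single (-1) 1 from rfl,
        AddMonoidAlgebra.coeff_single, show ((Finsupp.single (-1) 1 : ℤ →₀ R) n : R) = _ from Finsupp.single_apply]
      split_ifs with h
      · have : n.toNat = 0 := by omega
        rw [this, sectionsPow_zero]; trivial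
      · exact Ideal.zero_mem _
    · show ((C (u i) * T ((w i : ℤ)) : LaurentPolynomial R).coeff n : R) ∈ sectionsPow u w n.toNat
      rw [← single_eq_C_mul_T, AddMonoidAlgebra.coeff_single,
        show ((Finsupp.single ((w i : ℤ)) (u i) : ℤ →₀ R) n : R) = _ from Finsupp.single_apply]
      split_ifs with h
      · have hn : n.toNat ≤ w i := by omega
        exact sectionsPow_antitone u w hn (u_mem_sectionsPow u w i)
      · exact Ideal.zero_mem _
  | algebraMap r =>
    rw [LaurentPolynomial.algebraMap_apply, show (algebraMap R R) r = r from rfl,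
      show (C r : LaurentPolynomial R) = AddMonoidAlgebra.single 0 r by
        rw [single_eq_C_mul_T, T_zero, mul_one], AddMonoidAlgebra.coeff_single,
      show ((Finsupp.single (0:ℤ) r : ℤ →₀ R) n : R) = _ from Finsupp.single_apply]
    split_ifs with h
    · have : n.toNat = 0 := by omega
      rw [this, sectionsPow_zero]; trivial
    · exact Ideal.zero_mem _
  | add x y hx hy ihx ihy =>
    rw [show ((x + y : LaurentPolynomial R).coeff n : R) = x.coeff n + y.coeff n from rfl]
    exact Ideal.add_mem _ (ihx n) (ihy n)
  | mul x y hx hy ihx ihy =>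
    rw [AddMonoidAlgebra.mul_apply]
    refine Submodule.sum_mem _ fun a₁ _ => Submodule.sum_mem _ fun a₂ _ => ?_
    dsimp only
    split_ifs with h
    · have hle : n.toNat ≤ a₁.toNat + a₂.toNat := by omega
      exact sectionsPow_antitone u w hle (sectionsPow_mul_mem u w (ihx a₁) (ihy a₂))
    · exact Ideal.zero_mem _

lemma CT_mem {a : ℕ} {h : R} (hh : h ∈ sectionsPow u w a) :
    C h * T (a : ℤ) ∈ cobordantAlgebra u w := by
  induction hh using Submodule.span_induction with
  | mem y hy =>
    obtain ⟨c, hc, rfl⟩ := hy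
    have hgen : ∀ i, C (u i) * T (w i) ∈ cobordantAlgebra u w := fun i =>
      Algebra.subset_adjoin (Set.mem_insert_iff.2 (Or.inr ⟨i, rfl⟩))
    have hτ : (T (-1) : LaurentPolynomial R) ∈ cobordantAlgebra u w :=
      Algebra.subset_adjoin (Set.mem_insert _ _)
    have hmem : (∏ i, (C (u i) * T (w i)) ^ (c i)) * (T (-1)) ^ (∑ i, c i * w i - a)
        ∈ cobordantAlgebra u w :=
      mul_mem (prod_mem fun i _ => pow_mem (hgen i) _) (pow_mem hτ _)
    rw [prod_CT, T_pow, mul_assoc, ← T_add] at hmem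
    have : ((∑ i, c i * w i : ℕ) : ℤ) + ((∑ i, c i * w i - a : ℕ) : ℤ) * (-1) = (a : ℤ) := by
      omega
    rw [this] at hmem
    exact hmem
  | zero => simpa using Subalgebra.zero_mem _
  | add x y hx hy ihx ihy =>
    have : C (x + y) * T (a : ℤ) = C x * T a + C y * T a := by rw [map_add, add_mul]
    rw [this]; exact add_mem ihx ihy
  | smul r x hx ihx =>
    have : C (r • x) * T (a : ℤ) = r • (C x * T a) := by
      rw [smul_eq_mul, map_mul, mul_assoc, Algebra.smul_def,
        LaurentPolynomial.algebraMap_apply, Algebra.algebraMap_self_apply]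
    rw [this]; exact Subalgebra.smul_mem _ ihx r

end Aux


section Main
set_option maxHeartbeats 1000000
set_option synthInstance.maxHeartbeats 1000000

variable {R : Type*} [CommRing R] {k : ℕ} (u : Fin k → R) (w : Fin k → ℕ)
  (τ : cobordantAlgebra u w)

noncomputable def grMap (a : ℕ) :
    (sectionsPow u w a) →ₗ[R]
      (cobordantAlgebra u w ⧸ (Ideal.span {τ} : Ideal (cobordantAlgebra u w))) where
  toFun h := Ideal.Quotient.mkₐ R _ ⟨C h.1 * T (a : ℤ), CT_mem u w h.2⟩
  map_add' h g := by
    rw [← map_add]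
    exact congrArg _ (Subtype.ext (by show C (h.1 + g.1) * _ = _; rw [map_add, add_mul]; rfl))
  map_smul' r h := by
    rw [RingHom.id_apply, ← map_smul]
    refine congrArg (Ideal.Quotient.mkₐ R (Ideal.span {τ})) (Subtype.ext ?_)
    show C (r • h.1) * T (a : ℤ) = r • (C h.1 * T (a : ℤ))
    rw [smul_eq_mul, map_mul, mul_assoc, Algebra.smul_def,
      LaurentPolynomial.algebraMap_apply, Algebra.algebraMap_self_apply]

variable (hτ : (τ : LaurentPolynomial R) = T (-1))

noncomputable def grQMap (a : ℕ) :
    (sectionsPow u w a ⧸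
      Submodule.comap (sectionsPow u w a).subtype (sectionsPow u w (a + 1))) →ₗ[R]
      (cobordantAlgebra u w ⧸ (Ideal.span {τ} : Ideal (cobordantAlgebra u w))) :=
  Submodule.liftQ _ (grMap u w τ a) (by
    rintro ⟨h, hh⟩ hmem
    have hmem' : h ∈ sectionsPow u w (a + 1) := hmem
    rw [LinearMap.mem_ker]
    show Ideal.Quotient.mkₐ R _ _ = 0
    rw [Ideal.Quotient.mkₐ_eq_mk, Ideal.Quotient.eq_zero_iff_mem, Ideal.mem_span_singleton']
    refine ⟨⟨C h * T ((a + 1 : ℕ) : ℤ), CT_mem u w hmem'⟩, Subtype.ext ?_⟩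
    show C h * T ((a + 1 : ℕ) : ℤ) * (τ : LaurentPolynomial R) = C h * T (a : ℤ)
    rw [hτ, mul_assoc, ← T_add]
    norm_num)

noncomputable def psi :
    (⨁ a : ℕ, (sectionsPow u w a ⧸
      Submodule.comap (sectionsPow u w a).subtype (sectionsPow u w (a + 1)))) →ₗ[R]
      (cobordantAlgebra u w ⧸ (Ideal.span {τ} : Ideal (cobordantAlgebra u w))) :=
  DirectSum.toModule R ℕ _ (fun a => grQMap u w τ hτ a)

lemma psi_of (a : ℕ) (h : R) (hh : h ∈ sectionsPow u w a) :
    psi u w τ hτ (DirectSum.of _ a (Submodule.Quotient.mk ⟨h, hh⟩)) =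
      Ideal.Quotient.mk _ (⟨C h * T (a : ℤ), CT_mem u w hh⟩ : cobordantAlgebra u w) := by
  rw [psi, ← DirectSum.lof_eq_of R, DirectSum.toModule_lof]
  rfl

lemma psi_surjective : Function.Surjective (psi u w τ hτ) := by
  have hrange : ∀ (p : LaurentPolynomial R) (hp : p ∈ cobordantAlgebra u w),
      Ideal.Quotient.mk (Ideal.span {τ}) ⟨p, hp⟩ ∈ LinearMap.range (psi u w τ hτ) := by
    intro p hp
    induction hp using Algebra.adjoin_induction with
    | mem x hx =>
      rcases hx with rfl | ⟨i, rfl⟩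
      · refine (congrArg (fun z => Ideal.Quotient.mk (Ideal.span {τ}) z ∈ LinearMap.range (psi u w τ hτ))
          (Subtype.ext hτ.symm : (⟨T (-1), _⟩ : cobordantAlgebra u w) = τ)).mpr ?_
        have h0 : Ideal.Quotient.mk (Ideal.span {τ}) τ = 0 :=
          Ideal.Quotient.eq_zero_iff_mem.2 (Ideal.subset_span rfl)
        rw [h0]
        exact Submodule.zero_mem _
      · refine ⟨DirectSum.of _ (w i) (Submodule.Quotient.mk ⟨u i, u_mem_sectionsPow u w i⟩), ?_⟩
        rw [psi_of]
    | algebraMap r =>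
      refine ⟨DirectSum.of _ 0 (Submodule.Quotient.mk
        ⟨r, by rw [sectionsPow_zero]; trivial⟩), ?_⟩
      rw [psi_of]
      exact congrArg _ (Subtype.ext (by
        show C r * T ((0 : ℕ) : ℤ) = algebraMap R (LaurentPolynomial R) r
        rw [Nat.cast_zero, T_zero, mul_one, LaurentPolynomial.algebraMap_apply,
          Algebra.algebraMap_self_apply]))
    | add x y hx hy ihx ihy =>
      have : (⟨x + y, add_mem hx hy⟩ : cobordantAlgebra u w) = ⟨x, hx⟩ + ⟨y, hy⟩ := rfl
      rw [this, map_add]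
      exact Submodule.add_mem _ ihx ihy
    | mul x y hx hy ihx ihy =>
      have hmul : ∀ q₁ q₂, q₁ ∈ LinearMap.range (psi u w τ hτ) →
          q₂ ∈ LinearMap.range (psi u w τ hτ) →
          q₁ * q₂ ∈ LinearMap.range (psi u w τ hτ) := by
        rintro q₁ q₂ ⟨x₁, rfl⟩ ⟨x₂, rfl⟩
        induction x₁ using DirectSum.induction_on with
        | zero =>
          rw [map_zero]
          exact Set.mem_of_eq_of_mem (zero_mul ((psi u w τ hτ) x₂)) (Submodule.zero_mem _)
        | of a ξ =>
          induction x₂ using DirectSum.induction_on with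
          | zero =>
            rw [map_zero]
            exact Set.mem_of_eq_of_mem (mul_zero ((psi u w τ hτ) ((DirectSum.of _ a) ξ))) (Submodule.zero_mem _)
          | of b η =>
            obtain ⟨⟨g, hg⟩, rfl⟩ := Submodule.Quotient.mk_surjective _ ξ
            obtain ⟨⟨g', hg'⟩, rfl⟩ := Submodule.Quotient.mk_surjective _ η
            rw [psi_of, psi_of, ← map_mul]
            refine ⟨DirectSum.of _ (a + b) (Submodule.Quotient.mk
              ⟨g * g', sectionsPow_mul_mem u w hg hg'⟩), ?_⟩
            rw [psi_of]
            refine congrArg _ (Subtype.ext ?_)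
            show C (g * g') * T ((a + b : ℕ) : ℤ) = C g * T (a : ℤ) * (C g' * T (b : ℤ))
            rw [map_mul, Nat.cast_add, T_add]
            ring
          | add y₁ y₂ ih₁ ih₂ =>
            rw [map_add, mul_add]
            exact Submodule.add_mem _ ih₁ ih₂
        | add x₁ x₂ ih₁ ih₂ =>
          rw [map_add, add_mul]
          exact Submodule.add_mem _ ih₁ ih₂
      have hxy : (⟨x * y, mul_mem hx hy⟩ : cobordantAlgebra u w) = ⟨x, hx⟩ * ⟨y, hy⟩ := rfl
      rw [hxy, map_mul]
      exact hmul _ _ ihx ihy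
  intro q
  obtain ⟨z, rfl⟩ := Ideal.Quotient.mk_surjective q
  exact hrange z.1 z.2

lemma psi_rep (x : ⨁ a : ℕ, (sectionsPow u w a ⧸
      Submodule.comap (sectionsPow u w a).subtype (sectionsPow u w (a + 1)))) :
    ∃ P : cobordantAlgebra u w,
      Ideal.Quotient.mk (Ideal.span {τ}) P = psi u w τ hτ x ∧
      ∀ a : ℕ, ∃ hpa : ((P : LaurentPolynomial R).coeff (a : ℤ)) ∈ sectionsPow u w a,
        (Submodule.Quotient.mk ⟨(P : LaurentPolynomial R).coeff (a : ℤ), hpa⟩ :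
          sectionsPow u w a ⧸
            Submodule.comap (sectionsPow u w a).subtype (sectionsPow u w (a + 1))) = x a := by
  induction x using DirectSum.induction_on with
  | zero =>
    refine ⟨0, by rw [map_zero, map_zero], fun a => ?_⟩
    refine ⟨by simpa using Ideal.zero_mem _, ?_⟩
    rw [DirectSum.zero_apply]
    rw [Submodule.Quotient.mk_eq_zero]
    show ((0 : LaurentPolynomial R).coeff (a : ℤ)) ∈ sectionsPow u w (a + 1)
    simpa using Ideal.zero_mem _
  | of b ξ =>
    obtain ⟨⟨h, hh⟩, rfl⟩ := Submodule.Quotient.mk_surjective _ ξ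
    refine ⟨⟨C h * T (b : ℤ), CT_mem u w hh⟩, (psi_of u w τ hτ b h hh).symm, fun a => ?_⟩
    have hcoeff : ((C h * T (b : ℤ) : LaurentPolynomial R).coeff (a : ℤ)) =
        if (b : ℤ) = (a : ℤ) then h else 0 := by
      rw [← single_eq_C_mul_T]
      exact Finsupp.single_apply
    by_cases hab : a = b
    · subst hab
      simp only [if_pos rfl] at hcoeff
      refine ⟨by rw [show ((C h * T ((a : ℕ) : ℤ) : LaurentPolynomial R).coeff ((a : ℕ) : ℤ)) = h
        from hcoeff]; exact hh, ?_⟩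
      rw [DirectSum.of_eq_same]
      exact congrArg _ (Subtype.ext hcoeff)
    · have : ((C h * T (b : ℤ) : LaurentPolynomial R).coeff (a : ℤ)) = 0 := by
        rw [hcoeff, if_neg (by exact_mod_cast fun hba => hab (by omega))]
      refine ⟨by rw [this]; exact Ideal.zero_mem _, ?_⟩
      rw [DirectSum.of_eq_of_ne _ _ _ (fun hba => hab hba), Submodule.Quotient.mk_eq_zero]
      show ((C h * T (b : ℤ) : LaurentPolynomial R).coeff (a : ℤ)) ∈ sectionsPow u w (a + 1)
      rw [this]; exact Ideal.zero_mem _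
  | add x y ihx ihy =>
    obtain ⟨P, hP, hPa⟩ := ihx
    obtain ⟨Q, hQ, hQa⟩ := ihy
    refine ⟨P + Q, by rw [map_add, map_add, hP, hQ], fun a => ?_⟩
    obtain ⟨hpa, hxa⟩ := hPa a
    obtain ⟨hqa, hya⟩ := hQa a
    have hcoeff : (((P + Q : cobordantAlgebra u w) : LaurentPolynomial R).coeff (a : ℤ)) =
        (P : LaurentPolynomial R).coeff (a : ℤ) + (Q : LaurentPolynomial R).coeff (a : ℤ) := rfl
    refine ⟨by rw [hcoeff]; exact Ideal.add_mem _ hpa hqa, ?_⟩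
    rw [DirectSum.add_apply, ← hxa, ← hya, ← Submodule.Quotient.mk_add]
    exact congrArg _ (Subtype.ext hcoeff)

set_option maxHeartbeats 1000000 in
lemma psi_injective : Function.Injective (psi u w τ hτ) := by
  rw [injective_iff_map_eq_zero]
  intro x hx
  obtain ⟨P, hP, hPa⟩ := psi_rep u w τ hτ x
  rw [hx] at hP
  rw [Ideal.Quotient.eq_zero_iff_mem, Ideal.mem_span_singleton'] at hP
  obtain ⟨q, hq⟩ := hP
  have hqv : (q : LaurentPolynomial R) * T (-1) = (P : LaurentPolynomial R) := by
    have := congrArg (Subtype.val) hq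
    rwa [show ((q * τ : cobordantAlgebra u w) : LaurentPolynomial R)
      = (q : LaurentPolynomial R) * (τ : LaurentPolynomial R) from rfl, hτ] at this
  refine DFinsupp.ext fun a => ?_
  obtain ⟨hpa, hxa⟩ := hPa a
  rw [DirectSum.zero_apply, ← hxa, Submodule.Quotient.mk_eq_zero]
  show (P : LaurentPolynomial R).coeff (a : ℤ) ∈ sectionsPow u w (a + 1)
  have hcoeff : (P : LaurentPolynomial R).coeff (a : ℤ) = (q : LaurentPolynomial R).coeff ((a : ℤ) + 1) := by
    rw [← hqv,
      show (T (-1) : LaurentPolynomial R) = AddMonoidAlgebra.single (-1) (1 : R) from rfl,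
      AddMonoidAlgebra.coeff_mul_single_apply, mul_one]
    norm_num
  rw [hcoeff]
  have hmem := coeff_mem u w q.2 ((a : ℤ) + 1)
  have ht : ((a : ℤ) + 1).toNat = a + 1 := by omega
  rwa [ht] at hmem

end Main

set_option synthInstance.maxHeartbeats 1000000 in
/-- Let `J = (u₁^{1/w₁},…,u_k^{1/w_k})` be a regular weighted center on
a regular (local model of a) scheme `X` and `B → X` the full cobordant blow-up.  Then the
exceptional divisor `V_B(t⁻¹)` is isomorphic to the weighted normal bundle
`N_J(X) = Spec (gr_J O_X)`: there is an (`R`-linear, grading-compatible) isomorphism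
`O_B/(t⁻¹) ≅ gr_J(O_X) = ⊕_{a ≥ 0} (J^a)_X/(J^{a+1})_X`
sending, for `h ∈ (J^a)_X`, the class of `h·tᵃ ∈ O_B` to the class of `h` in the `a`-th
graded piece. -/
theorem exceptional_divisor_iso_weighted_normal_bundle
    {R : Type*} [CommRing R] [IsLocalRing R] [IsNoetherianRing R] {k : ℕ}
    (u : Fin k → R) (hu : IsPartialRegSystemOfParams u)
    (w : Fin k → ℕ) (hw : ∀ i, 0 < w i)
    (τ : cobordantAlgebra u w) (hτ : (τ : LaurentPolynomial R) = T (-1)) :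
    ∃ e : (cobordantAlgebra u w ⧸ (Ideal.span {τ} : Ideal (cobordantAlgebra u w))) ≃ₗ[R]
        ⨁ a : ℕ, (sectionsPow u w a ⧸
          Submodule.comap (sectionsPow u w a).subtype (sectionsPow u w (a + 1))),
      ∀ (a : ℕ) (h : R) (hh : h ∈ sectionsPow u w a)
        (z : cobordantAlgebra u w) (hz : (z : LaurentPolynomial R) = C h * T a),
        e (Ideal.Quotient.mk _ z) =
          DirectSum.of (fun a => (sectionsPow u w a ⧸
            Submodule.comap (sectionsPow u w a).subtype (sectionsPow u w (a + 1)))) a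
            (Submodule.Quotient.mk ⟨h, hh⟩) := by
  have hb : Function.Bijective (psi u w τ hτ) :=
    ⟨psi_injective u w τ hτ, psi_surjective u w τ hτ⟩
  refine ⟨(LinearEquiv.ofBijective (psi u w τ hτ) hb).symm, ?_⟩
  intro a h hh z hz
  have hz' : z = ⟨C h * T (a : ℤ), CT_mem u w hh⟩ := Subtype.ext hz
  rw [hz', LinearEquiv.symm_apply_eq, LinearEquiv.ofBijective_apply, psi_of]
end
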